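/- arXiv:math/0607550 — 2 statements merged into one kernel-verified Lean document; each statement's English description precedes it below -/
import Mathlib

section
/- Let M(v) = exp(-|v|²) on R^N with N ≥ 1, let γ ≥ 0, and let φ : R^N → R be measurable such that all integrals below are finite. Then ∫∫ |φ(x)-φ(y)|² |x-y|^γ M(x) M(y) dx dy ≥ K_γ ∫∫ |φ(x)-φ(y)|² M(x) M(y) dx dy, where K_γ = (1/(4∫M)) · inf_{x,y ∈ R^N} ∫ min{|x-z|^γ, |z-y|^γ} M(z) dz. -/
open Real MeasureTheory

theorem gaussian_coercivity_reduction (N : ℕ) (hN : 1 ≤ N) (γ : ℝ) (hγ : 0 ≤ γ)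
    (φ : EuclideanSpace ℝ (Fin N) → ℝ) (hφ : Measurable φ)
    (M : EuclideanSpace ℝ (Fin N) → ℝ)
    (hM : ∀ v, M v = Real.exp (-‖v‖ ^ 2))
    (h1 : Integrable (fun p : EuclideanSpace ℝ (Fin N) × EuclideanSpace ℝ (Fin N) =>
      (φ p.1 - φ p.2) ^ 2 * ‖p.1 - p.2‖ ^ γ * M p.1 * M p.2))
    (h2 : Integrable (fun p : EuclideanSpace ℝ (Fin N) × EuclideanSpace ℝ (Fin N) =>
      (φ p.1 - φ p.2) ^ 2 * M p.1 * M p.2))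
    (Kγ : ℝ)
    (hK : Kγ = (1 / (4 * ∫ v, M v)) *
      ⨅ p : EuclideanSpace ℝ (Fin N) × EuclideanSpace ℝ (Fin N),
        ∫ z, min (‖p.1 - z‖ ^ γ) (‖z - p.2‖ ^ γ) * M z) :
    (∫ p : EuclideanSpace ℝ (Fin N) × EuclideanSpace ℝ (Fin N),
        (φ p.1 - φ p.2) ^ 2 * ‖p.1 - p.2‖ ^ γ * M p.1 * M p.2) ≥
      Kγ * ∫ p : EuclideanSpace ℝ (Fin N) × EuclideanSpace ℝ (Fin N),
        (φ p.1 - φ p.2) ^ 2 * M p.1 * M p.2 := by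
  -- basic facts about M
  have hMpos : ∀ v, 0 < M v := fun v => by rw [hM]; positivity
  have hMnn : ∀ v, 0 ≤ M v := fun v => (hMpos v).le
  have hMint : Integrable M (volume : Measure (EuclideanSpace ℝ (Fin N))) := by
    have hc : Integrable
        (fun v : EuclideanSpace ℝ (Fin N) =>
          Complex.exp (-(1:ℂ) * ‖v‖^2 + (0:ℂ) * ((inner ℝ (0:EuclideanSpace ℝ (Fin N)) v : ℝ) : ℂ))) :=
      GaussianFourier.integrable_cexp_neg_mul_sq_norm_add (by norm_num) 0 0
    refine hc.norm.congr (Filter.Eventually.of_forall fun v => ?_)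
    have hrw : (-(1:ℂ) * ‖v‖^2 + (0:ℂ) * ((inner ℝ (0:EuclideanSpace ℝ (Fin N)) v : ℝ) : ℂ))
        = ((-‖v‖^2 : ℝ) : ℂ) := by push_cast; ring
    simp only [hrw, hM, Complex.norm_exp, Complex.ofReal_re]
  have hm : 0 < ∫ v, M v := by
    rw [integral_pos_iff_support_of_nonneg hMnn hMint]
    have : Function.support M = Set.univ := by
      ext v; simp [Function.support, (hMpos v).ne']
    rw [this]
    exact isOpen_univ.measure_pos volume ⟨0, trivial⟩
  -- notation
  set f1 : EuclideanSpace ℝ (Fin N) × EuclideanSpace ℝ (Fin N) → ℝ :=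
    fun p => (φ p.1 - φ p.2) ^ 2 * ‖p.1 - p.2‖ ^ γ * M p.1 * M p.2 with hf1
  set g : EuclideanSpace ℝ (Fin N) × EuclideanSpace ℝ (Fin N) → ℝ :=
    fun p => (φ p.1 - φ p.2) ^ 2 * M p.1 * M p.2 with hg
  set J : EuclideanSpace ℝ (Fin N) × EuclideanSpace ℝ (Fin N) → ℝ :=
    fun p => ∫ z, min (‖p.1 - z‖ ^ γ) (‖z - p.2‖ ^ γ) * M z with hJ
  set I : ℝ := ⨅ p : EuclideanSpace ℝ (Fin N) × EuclideanSpace ℝ (Fin N), J p with hI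
  rw [ge_iff_le, Measure.volume_eq_prod]
  rw [Measure.volume_eq_prod] at h1 h2
  have hf1sym : ∀ a b : EuclideanSpace ℝ (Fin N), f1 (a, b) = f1 (b, a) := by
    intro a b
    simp only [hf1]
    rw [norm_sub_rev]
    ring
  -- J is nonnegative, hence so is I
  have hminnn : ∀ (a b z : EuclideanSpace ℝ (Fin N)), 0 ≤ min (‖a - z‖ ^ γ) (‖z - b‖ ^ γ) :=
    fun a b z =>
      le_min (Real.rpow_nonneg (norm_nonneg _) _) (Real.rpow_nonneg (norm_nonneg _) _)
  have hJnn : ∀ p, 0 ≤ J p := fun p =>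
    integral_nonneg fun z => mul_nonneg (hminnn p.1 p.2 z) (hMnn z)
  have hInn : 0 ≤ I := le_ciInf hJnn
  have hIJ : ∀ p, I ≤ J p := fun p =>
    ciInf_le ⟨0, by rintro r ⟨q, rfl⟩; exact hJnn q⟩ p
  -- the marginal G
  set G : EuclideanSpace ℝ (Fin N) → ℝ := fun x => ∫ z, f1 (x, z) with hG
  have hGint : Integrable G := h1.integral_prod_left
  have hGsym : ∀ y, (∫ z, f1 (z, y)) = G y := fun y =>
    integral_congr_ae (Filter.Eventually.of_forall fun z => hf1sym z y)
  -- the comparison function F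
  set F : EuclideanSpace ℝ (Fin N) × EuclideanSpace ℝ (Fin N) → ℝ :=
    fun p => 2 * (G p.1 * M p.2 + M p.1 * G p.2) with hF
  have hFint : Integrable F (volume.prod volume) :=
    ((hGint.mul_prod hMint).add (hMint.mul_prod hGint)).const_mul 2
  -- the value of ∫ F
  have hIntG : (∫ x, G x) = ∫ p, f1 p ∂(volume.prod volume) := by
    rw [hG]
    exact MeasureTheory.integral_integral h1
  have hIntF : (∫ p, F p ∂(volume.prod volume))
      = 4 * (∫ v, M v) * ∫ p, f1 p ∂(volume.prod volume) := by
    rw [hF]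
    rw [integral_const_mul, integral_add (hGint.mul_prod hMint) (hMint.mul_prod hGint),
      integral_prod_mul, integral_prod_mul, hIntG]
    ring
  -- the pointwise (a.e.) estimate
  have hae1 : ∀ᵐ p ∂(volume.prod volume :
        Measure (EuclideanSpace ℝ (Fin N) × EuclideanSpace ℝ (Fin N))),
      Integrable (fun z => f1 (p.1, z)) :=
    Measure.quasiMeasurePreserving_fst.ae h1.prod_right_ae
  have hae2 : ∀ᵐ p ∂(volume.prod volume :
        Measure (EuclideanSpace ℝ (Fin N) × EuclideanSpace ℝ (Fin N))),
      Integrable (fun z => f1 (z, p.2)) :=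
    Measure.quasiMeasurePreserving_snd.ae h1.prod_left_ae
  have hptwise : ∀ᵐ p ∂(volume.prod volume :
      Measure (EuclideanSpace ℝ (Fin N) × EuclideanSpace ℝ (Fin N))), I * g p ≤ F p := by
    filter_upwards [hae1, hae2] with p ha hb
    obtain ⟨x, y⟩ := p
    simp only at ha hb
    have key : J (x, y) * ((φ x - φ y) ^ 2 * (M x * M y)) ≤ F (x, y) := by
      have hrw : J (x, y) * ((φ x - φ y) ^ 2 * (M x * M y))
          = ∫ z, (min (‖x - z‖ ^ γ) (‖z - y‖ ^ γ) * M z)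
              * ((φ x - φ y) ^ 2 * (M x * M y)) := by
        rw [hJ, ← integral_mul_const]
      have hrhs : F (x, y) = ∫ z, 2 * (f1 (x, z) * M y + M x * f1 (z, y)) := by
        rw [integral_const_mul, integral_add (ha.mul_const (M y)) (hb.const_mul (M x)),
          integral_mul_const, integral_const_mul, hF, hGsym, hG]
      rw [hrw, hrhs]
      refine integral_mono_of_nonneg (Filter.Eventually.of_forall fun z => ?_)
        (((ha.mul_const (M y)).add (hb.const_mul (M x))).const_mul 2)
        (Filter.Eventually.of_forall fun z => ?_)
      · exact mul_nonneg (mul_nonneg (hminnn x y z) (hMnn z))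
          (mul_nonneg (sq_nonneg _) (mul_nonneg (hMnn x) (hMnn y)))
      · simp only [hf1]
        set a := ‖x - z‖ ^ γ with hadef
        set b := ‖z - y‖ ^ γ with hbdef
        have hmin := hminnn x y z
        rw [← hadef, ← hbdef] at hmin
        have hmina : min a b ≤ a := min_le_left _ _
        have hminb : min a b ≤ b := min_le_right _ _
        have hsq : (φ x - φ y) ^ 2 ≤ 2 * (φ x - φ z) ^ 2 + 2 * (φ z - φ y) ^ 2 := by
          nlinarith [sq_nonneg (φ x + φ y - 2 * φ z)]
        have h₁ : min a b * (φ x - φ y) ^ 2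
            ≤ 2 * (φ x - φ z) ^ 2 * a + 2 * (φ z - φ y) ^ 2 * b := by
          nlinarith [mul_nonneg (sub_nonneg.mpr hmina) (sq_nonneg (φ x - φ z)),
            mul_nonneg (sub_nonneg.mpr hminb) (sq_nonneg (φ z - φ y)),
            mul_le_mul_of_nonneg_left hsq hmin]
        have hk : 0 ≤ M z * (M x * M y) := mul_nonneg (hMnn z) (mul_nonneg (hMnn x) (hMnn y))
        have h₂ := mul_le_mul_of_nonneg_right h₁ hk
        nlinarith [h₂]
    calc I * g (x, y) ≤ J (x, y) * g (x, y) :=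
          mul_le_mul_of_nonneg_right (hIJ (x, y))
            (by simp only [hg]; exact mul_nonneg (mul_nonneg (sq_nonneg _) (hMnn _)) (hMnn _))
      _ ≤ F (x, y) := by
          refine le_trans (le_of_eq ?_) key
          simp only [hg]; ring
  -- put everything together
  have hmain : I * (∫ p, g p ∂(volume.prod volume))
      ≤ 4 * (∫ v, M v) * ∫ p, f1 p ∂(volume.prod volume) := by
    rw [← integral_const_mul, ← hIntF]
    exact integral_mono_of_nonneg
      (Filter.Eventually.of_forall fun p => mul_nonneg hInn
        (by simp only [hg]; exact mul_nonneg (mul_nonneg (sq_nonneg _) (hMnn _)) (hMnn _)))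
      hFint hptwise
  rw [hK]
  calc (1 / (4 * ∫ v, M v)) * I * (∫ p, g p ∂(volume.prod volume))
      = (1 / (4 * ∫ v, M v)) * (I * ∫ p, g p ∂(volume.prod volume)) := by ring
    _ ≤ (1 / (4 * ∫ v, M v)) *
        (4 * (∫ v, M v) * ∫ p, f1 p ∂(volume.prod volume)) :=
          mul_le_mul_of_nonneg_left hmain (by positivity)
    _ = ∫ p, f1 p ∂(volume.prod volume) := by field_simp
end

section
/- For γ ≥ 0 and M(v) = e^{-|v|²} on R^N, the constant K_γ = (1/(4∫M)) inf_{x,y} ∫ min{|x-z|^γ, |z-y|^γ} M(z) dz is strictly positive. -/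
open Real MeasureTheory Metric Set Filter

lemma gauss_integrable (N : ℕ) {b : ℝ} (hb : 0 < b) :
    Integrable (fun v : EuclideanSpace ℝ (Fin N) => rexp (-b * ‖v‖ ^ 2)) := by
  have h := (GaussianFourier.integrable_cexp_neg_mul_sq_norm_add
    (V := EuclideanSpace ℝ (Fin N)) (b := (b : ℂ)) (by simpa using hb) 0 0).norm
  refine h.congr (Eventually.of_forall fun v => ?_)
  simp [Complex.norm_exp, ← Complex.ofReal_pow]

lemma key_integrable (N : ℕ) (γ : ℝ) (hγ : 0 ≤ γ) (x y : EuclideanSpace ℝ (Fin N)) :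
    Integrable (fun z : EuclideanSpace ℝ (Fin N) =>
      min (‖x - z‖ ^ γ) (‖z - y‖ ^ γ) * rexp (-‖z‖ ^ 2)) := by
  have hg : Integrable (fun v : EuclideanSpace ℝ (Fin N) => rexp (-(1/2) * ‖v‖ ^ 2)) :=
    gauss_integrable N (by norm_num)
  have hcont : Continuous (fun z : EuclideanSpace ℝ (Fin N) =>
      min (‖x - z‖ ^ γ) (‖z - y‖ ^ γ) * rexp (-‖z‖ ^ 2)) := by
    refine Continuous.mul (Continuous.min ?_ ?_) ?_
    · exact (continuous_const.sub continuous_id).norm.rpow_const (fun z => Or.inr hγ)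
    · exact (continuous_id.sub continuous_const).norm.rpow_const (fun z => Or.inr hγ)
    · exact ((continuous_norm.pow 2).neg).rexp
  refine hcont.locallyIntegrable.integrable_of_isBigO_cocompact
    (g := fun v : EuclideanSpace ℝ (Fin N) => rexp (-(1/2) * ‖v‖ ^ 2)) ?_
    (hg.integrableAtFilter _)
  refine Asymptotics.IsBigO.of_bound 1 ?_
  have hten : Tendsto (fun z : EuclideanSpace ℝ (Fin N) => ‖z‖)
      (cocompact _) atTop := tendsto_norm_cocompact_atTop
  filter_upwards [hten.eventually_ge_atTop (max 1 (max ‖x‖ (4 * γ)))] with z hz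
  set r := ‖z‖ with hrdef
  have hr1 : (1 : ℝ) ≤ r := le_trans (le_max_left _ _) hz
  have hrx : ‖x‖ ≤ r := le_trans (le_trans (le_max_left _ _) (le_max_right _ _)) hz
  have hrγ : 4 * γ ≤ r := le_trans (le_trans (le_max_right _ _) (le_max_right _ _)) hz
  have hr0 : (0 : ℝ) < r := lt_of_lt_of_le one_pos hr1
  have hxz : ‖x - z‖ ≤ 2 * r := by
    calc ‖x - z‖ ≤ ‖x‖ + ‖z‖ := norm_sub_le _ _
    _ ≤ 2 * r := by rw [← hrdef]; linarith
  have hmin0 : 0 ≤ min (‖x - z‖ ^ γ) (‖z - y‖ ^ γ) :=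
    le_min (Real.rpow_nonneg (norm_nonneg _) γ) (Real.rpow_nonneg (norm_nonneg _) γ)
  have key : min (‖x - z‖ ^ γ) (‖z - y‖ ^ γ) ≤ rexp ((1/2) * r ^ 2) := by
    calc min (‖x - z‖ ^ γ) (‖z - y‖ ^ γ) ≤ ‖x - z‖ ^ γ := min_le_left _ _
    _ ≤ (2 * r) ^ γ := Real.rpow_le_rpow (norm_nonneg _) hxz hγ
    _ = rexp (γ * Real.log (2 * r)) := by
        rw [Real.rpow_def_of_pos (by linarith), mul_comm]
    _ ≤ rexp ((1/2) * r ^ 2) := by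
        apply Real.exp_le_exp.2
        have hlog : Real.log (2 * r) ≤ 2 * r := (Real.log_le_sub_one_of_pos (by linarith)).trans
          (by linarith)
        have h1 : γ * Real.log (2 * r) ≤ γ * (2 * r) :=
          mul_le_mul_of_nonneg_left hlog hγ
        nlinarith
  have hnorm : ‖min (‖x - z‖ ^ γ) (‖z - y‖ ^ γ) * rexp (-‖z‖ ^ 2)‖
      = min (‖x - z‖ ^ γ) (‖z - y‖ ^ γ) * rexp (-‖z‖ ^ 2) := by
    rw [Real.norm_eq_abs, abs_of_nonneg (mul_nonneg hmin0 (Real.exp_pos _).le)]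
  rw [hnorm, Real.norm_eq_abs, abs_of_nonneg (Real.exp_pos _).le, one_mul, ← hrdef]
  calc min (‖x - z‖ ^ γ) (‖z - y‖ ^ γ) * rexp (-r ^ 2)
      ≤ rexp ((1/2) * r ^ 2) * rexp (-r ^ 2) :=
        mul_le_mul_of_nonneg_right key (Real.exp_pos _).le
  _ = rexp (-(1/2) * r ^ 2) := by rw [← Real.exp_add]; ring_nf

theorem gaussian_coercivity_constant_pos (N : ℕ) (hN : 1 ≤ N) (γ : ℝ) (hγ : 0 ≤ γ)
    (M : EuclideanSpace ℝ (Fin N) → ℝ)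
    (hM : ∀ v, M v = Real.exp (-‖v‖ ^ 2))
    (Kγ : ℝ)
    (hK : Kγ = (1 / (4 * ∫ v, M v)) *
      ⨅ p : EuclideanSpace ℝ (Fin N) × EuclideanSpace ℝ (Fin N),
        ∫ z, min (‖p.1 - z‖ ^ γ) (‖z - p.2‖ ^ γ) * M z) :
    0 < Kγ := by
  have hMeq : M = fun v => rexp (-‖v‖ ^ 2) := funext hM
  have hMint : Integrable M := by
    refine (gauss_integrable N one_pos).congr (Eventually.of_forall fun v => ?_)
    simp [hM v, neg_one_mul]
  have hMpos : ∀ v, 0 < M v := fun v => by rw [hM]; exact Real.exp_pos _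
  set c := ∫ v, M v with hcdef
  have hc : 0 < c := by
    rw [hcdef, integral_pos_iff_support_of_nonneg (fun v => (hMpos v).le) hMint]
    have hsupp : Function.support M = Set.univ :=
      Set.eq_univ_of_forall fun v => (hMpos v).ne'
    rw [hsupp]
    exact isOpen_univ.measure_pos volume ⟨0, trivial⟩
  set V₁ : ℝ := (volume (closedBall (0 : EuclideanSpace ℝ (Fin N)) 1)).toReal with hV₁def
  have hV₁ : 0 ≤ V₁ := ENNReal.toReal_nonneg
  set r : ℝ := min 1 (c / (4 * (V₁ + 1))) with hrdef
  have hr0 : 0 < r := lt_min one_pos (by positivity)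
  have hr1 : r ≤ 1 := min_le_left _ _
  -- each small ball has small Gaussian mass
  have hball : ∀ x : EuclideanSpace ℝ (Fin N), ∫ z in closedBall x r, M z ≤ c / 4 := by
    intro x
    have h2 : ‖∫ z in closedBall x r, M z‖ ≤ 1 * (volume (closedBall x r)).toReal := by
      refine norm_setIntegral_le_of_norm_le_const measure_closedBall_lt_top
        (fun z _ => ?_)
      rw [hM z, Real.norm_eq_abs, abs_of_pos (Real.exp_pos _)]
      simpa using Real.exp_le_exp.2 (neg_nonpos.2 (by positivity : (0:ℝ) ≤ ‖z‖ ^ 2))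
    have h3 : (volume (closedBall x r)).toReal = r ^ N * V₁ := by
      rw [Measure.addHaar_closedBall' volume x hr0.le, ENNReal.toReal_mul,
        ENNReal.toReal_ofReal (by positivity), finrank_euclideanSpace_fin]
    have h4 : r ^ N ≤ r := pow_le_of_le_one hr0.le hr1 (by omega)
    have h5 : r ≤ c / (4 * (V₁ + 1)) := min_le_right _ _
    have h6 : r * V₁ ≤ c / 4 := by
      rw [le_div_iff₀ (by positivity)] at h5
      nlinarith
    calc ∫ z in closedBall x r, M z ≤ ‖∫ z in closedBall x r, M z‖ := le_abs_self _
    _ ≤ 1 * (volume (closedBall x r)).toReal := h2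
    _ = r ^ N * V₁ := by rw [one_mul, h3]
    _ ≤ r * V₁ := mul_le_mul_of_nonneg_right h4 hV₁
    _ ≤ c / 4 := h6
  -- uniform lower bound for the integral
  have hmain : ∀ p : EuclideanSpace ℝ (Fin N) × EuclideanSpace ℝ (Fin N),
      r ^ γ * (c / 2) ≤ ∫ z, min (‖p.1 - z‖ ^ γ) (‖z - p.2‖ ^ γ) * M z := by
    rintro ⟨x, y⟩
    have hfint : Integrable (fun z => min (‖x - z‖ ^ γ) (‖z - y‖ ^ γ) * M z) := by
      rw [hMeq]; exact key_integrable N γ hγ x y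
    have hf0 : ∀ z, 0 ≤ min (‖x - z‖ ^ γ) (‖z - y‖ ^ γ) * M z := fun z =>
      mul_nonneg (le_min (Real.rpow_nonneg (norm_nonneg _) γ)
        (Real.rpow_nonneg (norm_nonneg _) γ)) (hMpos z).le
    set U : Set (EuclideanSpace ℝ (Fin N)) := closedBall x r ∪ closedBall y r with hUdef
    have hU : MeasurableSet U := (measurableSet_closedBall).union measurableSet_closedBall
    -- mass of U is at most c/2
    have hUmass : ∫ z in U, M z ≤ c / 2 := by
      have hsplit : ∫ z in U, M z
          = (∫ z in closedBall x r, M z) + ∫ z in closedBall y r \ closedBall x r, M z := by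
        rw [hUdef, union_diff_self.symm]
        exact setIntegral_union disjoint_sdiff_right
          (measurableSet_closedBall.diff measurableSet_closedBall)
          hMint.integrableOn hMint.integrableOn
      have hsub : ∫ z in closedBall y r \ closedBall x r, M z ≤ ∫ z in closedBall y r, M z :=
        setIntegral_mono_set hMint.integrableOn
          (Eventually.of_forall fun z => (hMpos z).le)
          (HasSubset.Subset.eventuallyLE diff_subset)
      calc ∫ z in U, M z
          ≤ (∫ z in closedBall x r, M z) + ∫ z in closedBall y r, M z := by
            rw [hsplit]; exact add_le_add_right hsub _
      _ ≤ c / 4 + c / 4 := add_le_add (hball x) (hball y)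
      _ = c / 2 := by ring
    have hScompl : c / 2 ≤ ∫ z in Uᶜ, M z := by
      have hadd := integral_add_compl hU hMint
      rw [← hcdef] at hadd
      linarith
    -- pointwise bound on Uᶜ
    have step2 : ∫ z in Uᶜ, r ^ γ * M z
        ≤ ∫ z in Uᶜ, min (‖x - z‖ ^ γ) (‖z - y‖ ^ γ) * M z := by
      refine setIntegral_mono_on ((hMint.const_mul _).integrableOn)
        hfint.integrableOn hU.compl (fun z hz => ?_)
      rw [hUdef, compl_union, mem_inter_iff] at hz
      obtain ⟨hzx, hzy⟩ := hz
      rw [mem_compl_iff, mem_closedBall, not_le] at hzx hzy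
      have hx' : r ≤ ‖x - z‖ := by
        rw [norm_sub_rev]
        rw [dist_eq_norm] at hzx
        exact hzx.le
      have hy' : r ≤ ‖z - y‖ := by
        rw [dist_eq_norm] at hzy
        exact hzy.le
      have : r ^ γ ≤ min (‖x - z‖ ^ γ) (‖z - y‖ ^ γ) :=
        le_min (Real.rpow_le_rpow hr0.le hx' hγ) (Real.rpow_le_rpow hr0.le hy' hγ)
      exact mul_le_mul_of_nonneg_right this (hMpos z).le
    have step3 : ∫ z in Uᶜ, r ^ γ * M z = r ^ γ * ∫ z in Uᶜ, M z := integral_const_mul _ _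
    have step1 : ∫ z in Uᶜ, min (‖x - z‖ ^ γ) (‖z - y‖ ^ γ) * M z
        ≤ ∫ z, min (‖x - z‖ ^ γ) (‖z - y‖ ^ γ) * M z :=
      setIntegral_le_integral hfint (Eventually.of_forall hf0)
    calc r ^ γ * (c / 2) ≤ r ^ γ * ∫ z in Uᶜ, M z :=
          mul_le_mul_of_nonneg_left hScompl (Real.rpow_nonneg hr0.le γ)
    _ = ∫ z in Uᶜ, r ^ γ * M z := step3.symm
    _ ≤ ∫ z in Uᶜ, min (‖x - z‖ ^ γ) (‖z - y‖ ^ γ) * M z := step2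
    _ ≤ ∫ z, min (‖x - z‖ ^ γ) (‖z - y‖ ^ γ) * M z := step1
  have hinf : r ^ γ * (c / 2)
      ≤ ⨅ p : EuclideanSpace ℝ (Fin N) × EuclideanSpace ℝ (Fin N),
        ∫ z, min (‖p.1 - z‖ ^ γ) (‖z - p.2‖ ^ γ) * M z := le_ciInf hmain
  rw [hK]
  have h1 : 0 < 1 / (4 * c) := by positivity
  have h2 : (0 : ℝ) < r ^ γ * (c / 2) :=
    mul_pos (Real.rpow_pos_of_pos hr0 γ) (by linarith)
  exact mul_pos h1 (lt_of_lt_of_le h2 hinf)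
end
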